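/- In G_{2n+1}, the centralizer C(a) of a = (1, 2n+1, 2n, …, n+2, −(n+1), …, −2) has order 2^{n+1}; explicitly it is generated by the elements (1, ε₂(2n+1), ε₃(2n), …, ε_{n+1}(n+2), −ε_{n+1}(n+1), …, −ε₂(2)) for ε_j = ±1. -/

import Mathlib

/-- The signed permutation matrix `a = (1, 2n+1, 2n, …, n+2, −(n+1), …, −3, −2)`
(column `j` is `ε_j e_{σ(j)}`), written with 0-based indices. -/
def Amat (n : ℕ) : Matrix (Fin (2*n+1)) (Fin (2*n+1)) ℤ := fun i j =>
  if (j : ℕ) = 0 then (if (i : ℕ) = 0 then 1 else 0)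
  else if (i : ℕ) = 2*n+1 - (j : ℕ) then (if (j : ℕ) ≤ n then 1 else -1) else 0

/-- The cyclic permutation matrix `b = (2n+1, 1, 2, …, 2n)`, with 0-based indices:
column `j` is `e_{j-1 (mod 2n+1)}`. -/
def Bmat (n : ℕ) : Matrix (Fin (2*n+1)) (Fin (2*n+1)) ℤ := fun i j =>
  if i = j - 1 then 1 else 0

namespace CentralizerAux

open Matrix
open Fin.CommRing

variable {n : ℕ}

/-! ### Monomial matrices -/

/-- monomial matrix: column `j` equals `δ j • e_{σ j}`. -/
def mono (σ : Equiv.Perm (Fin (2*n+1))) (δ : Fin (2*n+1) → ℤ) :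
    Matrix (Fin (2*n+1)) (Fin (2*n+1)) ℤ :=
  Matrix.of fun i j => if i = σ j then δ j else 0

lemma mono_mul (σ σ' : Equiv.Perm (Fin (2*n+1))) (δ δ' : Fin (2*n+1) → ℤ) :
    mono σ δ * mono σ' δ' = mono (σ * σ') (fun j => δ (σ' j) * δ' j) := by
  ext i j
  simp only [mono, Matrix.mul_apply, Matrix.of_apply, Equiv.Perm.mul_apply]
  rw [Finset.sum_eq_single (σ' j)]
  · simp [ite_mul]; congr
  · intro k _ hk
    simp [Ne.symm hk, hk]
  · simp

lemma mono_one_eq (δ : Fin (2*n+1) → ℤ) : mono 1 δ = Matrix.diagonal δ := by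
  ext i j
  simp only [mono, Matrix.of_apply, Equiv.Perm.one_apply, Matrix.diagonal]
  by_cases h : i = j <;> simp [h]

lemma mono_id : (mono (n := n) 1 (fun _ => 1)) = 1 := by
  rw [mono_one_eq]; simp [Matrix.diagonal_one]

lemma mono_inj {σ σ' : Equiv.Perm (Fin (2*n+1))} {δ δ' : Fin (2*n+1) → ℤ}
    (hδ : ∀ j, δ j ≠ 0) (h : mono σ δ = mono σ' δ') : σ = σ' ∧ δ = δ' := by
  have key : ∀ j, σ j = σ' j ∧ δ j = δ' j := by
    intro j
    have := congrFun (congrFun h (σ j)) j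
    simp only [mono, Matrix.of_apply, if_pos rfl] at this
    by_cases hs : σ j = σ' j
    · refine ⟨hs, ?_⟩; simpa [hs] using this
    · rw [if_neg hs] at this; exact absurd this (hδ j)
  exact ⟨Equiv.ext fun j => (key j).1, funext fun j => (key j).2⟩

/-! ### `Fin (2n+1)` arithmetic -/

lemma fin_add_self_eq_zero {j : Fin (2*n+1)} (h : j + j = 0) : j = 0 := by
  have hv : ((j + j : Fin (2*n+1)) : ℕ) = (j.val + j.val) % (2*n+1) := Fin.val_add j j
  rw [h] at hv
  simp only [Fin.val_zero] at hv
  have hlt := j.isLt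
  have hd : (2*n+1) ∣ (j.val + j.val) := Nat.dvd_of_mod_eq_zero hv.symm
  rcases hd with ⟨k, hk⟩
  have : j.val = 0 := by
    rcases Nat.lt_or_ge k 2 with hk2 | hk2
    · interval_cases k <;> omega
    · nlinarith
  exact Fin.ext this

lemma fin_neg_ne {j : Fin (2*n+1)} (h : j ≠ 0) : -j ≠ j := by
  intro he
  apply h
  apply fin_add_self_eq_zero
  nth_rewrite 1 [← he]
  simp

lemma fin_neg_val {j : Fin (2*n+1)} (h : j ≠ 0) : ((-j : Fin (2*n+1)) : ℕ) = 2*n+1 - j.val := by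
  rw [Fin.coe_neg]
  have h1 : j.val ≠ 0 := fun h0 => h (Fin.ext h0)
  have := j.isLt
  rw [Nat.mod_eq_of_lt]; omega

lemma fin_eq_zero_iff_val {j : Fin (2*n+1)} : j = 0 ↔ (j : ℕ) = 0 := by
  rw [Fin.ext_iff, Fin.val_zero]

lemma prodSym (f : Fin (2*n+1) → ℤ) (h1 : ∀ j, f j = 1 ∨ f j = -1)
    (hs : ∀ j, f (-j) = f j) : ∏ j, f j = f 0 := by
  rw [← Finset.prod_erase_mul _ _ (Finset.mem_univ (0 : Fin (2*n+1)))]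
  have key : ∏ j ∈ Finset.univ.erase (0 : Fin (2*n+1)), f j = 1 := by
    apply Finset.prod_involution (fun j _ => -j)
    · intro j hj
      rw [hs]
      rcases h1 j with h | h <;> rw [h] <;> norm_num
    · intro j hj _
      exact fin_neg_ne (Finset.mem_erase.1 hj).1
    · intro j hj; simp
    · intro j hj
      have hj0 := (Finset.mem_erase.1 hj).1
      simp only [Finset.mem_erase, Finset.mem_univ, and_true, ne_eq, neg_eq_zero]
      exact hj0
  rw [key, one_mul]

/-! ### `Amat` and `Bmat` as monomial matrices -/

def sgnA (n : ℕ) : Fin (2*n+1) → ℤ := fun j => if (j : ℕ) ≤ n then 1 else -1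

lemma Amat_eq : Amat n = mono (Equiv.neg _) (sgnA n) := by
  ext i j
  simp only [Amat, mono, Matrix.of_apply, Equiv.neg_apply, sgnA]
  by_cases hj : j = 0
  · subst hj
    rw [if_pos (Fin.val_zero _), neg_zero, if_pos (by simp : ((0:Fin (2*n+1)):ℕ) ≤ n)]
    by_cases hi : i = 0
    · rw [if_pos hi, if_pos (fin_eq_zero_iff_val.1 hi)]
    · rw [if_neg hi, if_neg (fun h => hi (fin_eq_zero_iff_val.2 h))]
  · rw [if_neg (fun h => hj (fin_eq_zero_iff_val.2 h))]
    have hval : i = -j ↔ (i : ℕ) = 2*n+1 - (j : ℕ) := by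
      rw [Fin.ext_iff, fin_neg_val hj]
    by_cases hc : (i : ℕ) = 2*n+1 - (j : ℕ)
    · rw [if_pos hc, if_pos (hval.2 hc)]
    · rw [if_neg hc, if_neg (fun h => hc (hval.1 h))]

lemma sgnA_pm (j : Fin (2*n+1)) : sgnA n j = 1 ∨ sgnA n j = -1 := by
  unfold sgnA; split <;> simp

lemma sgnA_zero : sgnA n 0 = 1 := by simp [sgnA]

lemma sgnA_neg {j : Fin (2*n+1)} (h : j ≠ 0) : sgnA n (-j) = -sgnA n j := by
  have h1 : j.val ≠ 0 := fun h0 => h (Fin.ext h0)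
  have h2 := j.isLt
  unfold sgnA
  rw [fin_neg_val h]
  by_cases hc : (j : ℕ) ≤ n
  · rw [if_pos hc, if_neg (by omega)]
  · rw [if_neg hc, if_pos (by omega)]; norm_num

lemma abs_Amat (i j : Fin (2*n+1)) : |Amat n i j| = if i = -j then 1 else 0 := by
  rw [Amat_eq]
  simp only [mono, Matrix.of_apply, Equiv.neg_apply]
  split
  · rcases sgnA_pm (n := n) j with h | h <;> rw [h] <;> norm_num
  · simp

lemma of_abs (δ : Fin (2*n+1) → ℤ) :
    (Matrix.of fun i j => δ j * |Amat n i j|) = mono (Equiv.neg _) δ := by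
  ext i j
  rw [Matrix.of_apply, abs_Amat]
  simp only [mono, Matrix.of_apply, Equiv.neg_apply]
  split <;> simp

lemma Bmat_eq : Bmat n = mono (Equiv.subRight 1) (fun _ => 1) := by
  ext i j
  simp [Bmat, mono, Equiv.subRight_apply]

/-! ### The group `SLn` -/

abbrev SLn (n : ℕ) := Matrix.SpecialLinearGroup (Fin (2*n+1)) ℤ

lemma coe_inv_of (g : SLn n) (M : Matrix (Fin (2*n+1)) (Fin (2*n+1)) ℤ)
    (h : (g : Matrix (Fin (2*n+1)) (Fin (2*n+1)) ℤ) * M = 1) :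
    ((g⁻¹ : SLn n) : Matrix (Fin (2*n+1)) (Fin (2*n+1)) ℤ) = M := by
  calc ((g⁻¹ : SLn n) : Matrix (Fin (2*n+1)) (Fin (2*n+1)) ℤ)
      = ↑(g⁻¹) * ((g : Matrix (Fin (2*n+1)) (Fin (2*n+1)) ℤ) * M) := by rw [h, mul_one]
    _ = (↑(g⁻¹) * (g : Matrix (Fin (2*n+1)) (Fin (2*n+1)) ℤ)) * M := by rw [mul_assoc]
    _ = ((g⁻¹ * g : SLn n) : Matrix (Fin (2*n+1)) (Fin (2*n+1)) ℤ) * M := by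
        rw [Matrix.SpecialLinearGroup.coe_mul]
    _ = M := by rw [inv_mul_cancel, Matrix.SpecialLinearGroup.coe_one, one_mul]

/-! ### The dihedral subgroup of signed permutation matrices -/

def Dih (σ : Equiv.Perm (Fin (2*n+1))) : Prop :=
  (∃ k, ∀ j, σ j = j + k) ∨ (∃ k, ∀ j, σ j = -j + k)

lemma dih_one : Dih (n := n) 1 := Or.inl ⟨0, by simp⟩

lemma dih_mul {σ τ : Equiv.Perm (Fin (2*n+1))} (hσ : Dih σ) (hτ : Dih τ) : Dih (σ * τ) := by
  rcases hσ with ⟨k, hσ⟩ | ⟨k, hσ⟩ <;> rcases hτ with ⟨l, hτ⟩ | ⟨l, hτ⟩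
  · exact Or.inl ⟨l + k, fun j => by simp only [Equiv.Perm.mul_apply, hσ, hτ]; ring⟩
  · exact Or.inr ⟨l + k, fun j => by simp only [Equiv.Perm.mul_apply, hσ, hτ]; ring⟩
  · exact Or.inr ⟨-l + k, fun j => by simp only [Equiv.Perm.mul_apply, hσ, hτ]; ring⟩
  · exact Or.inl ⟨-l + k, fun j => by simp only [Equiv.Perm.mul_apply, hσ, hτ]; ring⟩

lemma dih_inv {σ : Equiv.Perm (Fin (2*n+1))} (hσ : Dih σ) : Dih σ⁻¹ := by
  rcases hσ with ⟨k, hσ⟩ | ⟨k, hσ⟩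
  · refine Or.inl ⟨-k, fun j => ?_⟩
    apply σ.injective
    rw [← Equiv.Perm.mul_apply, mul_inv_cancel, Equiv.Perm.one_apply, hσ]; ring
  · refine Or.inr ⟨k, fun j => ?_⟩
    apply σ.injective
    rw [← Equiv.Perm.mul_apply, mul_inv_cancel, Equiv.Perm.one_apply, hσ]; ring

lemma dih_neg : Dih (Equiv.neg (Fin (2*n+1))) :=
  Or.inr ⟨0, fun j => by simp [Equiv.neg_apply]⟩

lemma dih_subRight : Dih (Equiv.subRight (1 : Fin (2*n+1))) :=
  Or.inl ⟨-1, fun j => by simp [Equiv.subRight_apply]; ring⟩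

def Tgrp (n : ℕ) : Subgroup (SLn n) where
  carrier := {c | ∃ σ δ, Dih σ ∧ (∀ j, δ j = 1 ∨ δ j = -1) ∧
    (c : Matrix (Fin (2*n+1)) (Fin (2*n+1)) ℤ) = mono σ δ}
  one_mem' := ⟨1, fun _ => 1, dih_one, fun _ => Or.inl rfl, by
    rw [Matrix.SpecialLinearGroup.coe_one, mono_id]⟩
  mul_mem' := by
    rintro x y ⟨σ, δ, hσ, hδ, hx⟩ ⟨τ, ε, hτ, hε, hy⟩
    refine ⟨σ * τ, fun j => δ (τ j) * ε j, dih_mul hσ hτ, ?_, ?_⟩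
    · intro j
      rcases hδ (τ j) with h1 | h1 <;> rcases hε j with h2 | h2 <;> simp [h1, h2]
    · rw [Matrix.SpecialLinearGroup.coe_mul, hx, hy, mono_mul]
  inv_mem' := by
    rintro x ⟨σ, δ, hσ, hδ, hx⟩
    refine ⟨σ⁻¹, fun j => δ (σ⁻¹ j), dih_inv hσ, fun j => hδ _, ?_⟩
    apply coe_inv_of
    rw [hx, mono_mul, mul_inv_cancel]
    have : (fun j => δ (σ⁻¹ j) * δ (σ⁻¹ j)) = fun _ => (1 : ℤ) := by
      funext j
      rcases hδ (σ⁻¹ j) with h | h <;> rw [h] <;> norm_num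
    rw [this, mono_id]

/-! ### Generating the symmetric diagonal subgroup from `a` and `b` -/

section gen
variable (a b : SLn n)
  (haM : (a : Matrix (Fin (2*n+1)) (Fin (2*n+1)) ℤ) = mono (Equiv.neg _) (sgnA n))
  (hbM : (b : Matrix (Fin (2*n+1)) (Fin (2*n+1)) ℤ) = mono (Equiv.subRight 1) (fun _ => 1))

def eta (n : ℕ) : Fin (2*n+1) → ℤ := fun j => if j = 0 then 1 else -1

lemma negPerm_sq : (Equiv.neg (Fin (2*n+1))) * (Equiv.neg (Fin (2*n+1))) = 1 := by
  ext j; simp [Equiv.neg_apply]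

include haM in
lemma a_sq : ((a * a : SLn n) : Matrix (Fin (2*n+1)) (Fin (2*n+1)) ℤ)
    = Matrix.diagonal (eta n) := by
  rw [Matrix.SpecialLinearGroup.coe_mul, haM, mono_mul, negPerm_sq]
  have hfun : (fun j => sgnA n ((Equiv.neg (Fin (2*n+1))) j) * sgnA n j) = eta n := by
    funext j
    simp only [Equiv.neg_apply, eta]
    by_cases hj : j = 0
    · subst hj; simp [sgnA_zero]
    · rw [sgnA_neg hj, if_neg hj]
      rcases sgnA_pm (n := n) j with h | h <;> rw [h] <;> norm_num
  rw [hfun, mono_one_eq]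

lemma subRight_pow (k : ℕ) : ∀ j : Fin (2*n+1),
    ((Equiv.subRight (1 : Fin (2*n+1)))^k) j = j - (k : Fin (2*n+1)) := by
  induction k with
  | zero => simp
  | succ k ih =>
    intro j
    rw [pow_succ, Equiv.Perm.mul_apply, Equiv.subRight_apply, ih]
    push_cast
    ring

lemma mono_pow (σ : Equiv.Perm (Fin (2*n+1))) (k : ℕ) :
    (mono σ (fun _ => (1:ℤ)))^k = mono (σ^k) (fun _ => 1) := by
  induction k with
  | zero => simp [mono_id]
  | succ k ih => rw [pow_succ, ih, mono_mul, ← pow_succ]; simp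

include hbM in
lemma b_pow (k : ℕ) : ((b^k : SLn n) : Matrix (Fin (2*n+1)) (Fin (2*n+1)) ℤ)
    = mono ((Equiv.subRight (1 : Fin (2*n+1)))^k) (fun _ => 1) := by
  rw [Matrix.SpecialLinearGroup.coe_pow, hbM, mono_pow]

include haM hbM in
lemma exists_onePos (t : Fin (2*n+1)) :
    ∃ d ∈ Subgroup.closure {a, b}, (d : Matrix (Fin (2*n+1)) (Fin (2*n+1)) ℤ)
      = Matrix.diagonal (fun j => if j = t then 1 else -1) := by
  have hamem : a ∈ Subgroup.closure {a, b} :=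
    Subgroup.subset_closure (Set.mem_insert _ _)
  have hbmem : b ∈ Subgroup.closure {a, b} :=
    Subgroup.subset_closure (Set.mem_insert_of_mem _ rfl)
  set k : Fin (2*n+1) := -t with hk
  set g : SLn n := b ^ (k.val) with hg
  set s := (Equiv.subRight (1 : Fin (2*n+1)))^(k.val) with hs
  have hgv : (g : Matrix (Fin (2*n+1)) (Fin (2*n+1)) ℤ) = mono s (fun _ => 1) := b_pow b hbM _
  have hsapp : ∀ j, s j = j - k := by
    intro j; rw [hs, subRight_pow, Fin.cast_val_eq_self]
  have hsinv : ∀ j, s⁻¹ j = j + k := by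
    intro j
    apply s.injective
    rw [← Equiv.Perm.mul_apply, mul_inv_cancel, Equiv.Perm.one_apply, hsapp]
    ring
  have hginv : ((g⁻¹ : SLn n) : Matrix (Fin (2*n+1)) (Fin (2*n+1)) ℤ) = mono s⁻¹ (fun _ => 1) := by
    apply coe_inv_of
    rw [hgv, mono_mul, mul_inv_cancel]
    simpa using mono_id
  refine ⟨g * (a * a) * g⁻¹, ?_, ?_⟩
  · exact Subgroup.mul_mem _ (Subgroup.mul_mem _ (Subgroup.pow_mem _ hbmem _)
      (Subgroup.mul_mem _ hamem hamem)) (Subgroup.inv_mem _ (Subgroup.pow_mem _ hbmem _))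
  · rw [Matrix.SpecialLinearGroup.coe_mul, Matrix.SpecialLinearGroup.coe_mul,
      hgv, hginv, a_sq a haM, ← mono_one_eq, mono_mul, mono_mul]
    have h1 : s * 1 * s⁻¹ = 1 := by rw [mul_one, mul_inv_cancel]
    have hfun : (fun j => 1 * eta n (s⁻¹ j) * 1) = (fun j : Fin (2*n+1) => if j = t then (1:ℤ) else -1) := by
      funext j
      simp only [hsinv, eta, one_mul, mul_one]
      have heq : j + k = 0 ↔ j = t := by
        rw [add_eq_zero_iff_eq_neg, hk, neg_neg]
      by_cases hc : j = t
      · rw [if_pos (heq.2 hc), if_pos hc]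
      · rw [if_neg (fun h => hc (heq.1 h)), if_neg hc]
    rw [h1, hfun, mono_one_eq]

include haM hbM in
lemma exists_pair (t : Fin (2*n+1)) (ht : t ≠ 0) :
    ∃ E ∈ Subgroup.closure {a, b}, (E : Matrix (Fin (2*n+1)) (Fin (2*n+1)) ℤ)
      = Matrix.diagonal (fun j => if j = t ∨ j = -t then -1 else 1) := by
  obtain ⟨d1, hd1m, hd1⟩ := exists_onePos a b haM hbM t
  obtain ⟨d2, hd2m, hd2⟩ := exists_onePos a b haM hbM (-t)
  refine ⟨d1 * d2, Subgroup.mul_mem _ hd1m hd2m, ?_⟩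
  rw [Matrix.SpecialLinearGroup.coe_mul, hd1, hd2, Matrix.diagonal_mul_diagonal]
  apply congrArg Matrix.diagonal
  funext j
  have hne : -t ≠ t := fin_neg_ne ht
  by_cases h1 : j = t
  · subst h1
    rw [if_pos rfl, if_neg (fun h => hne (h.symm)), if_pos (Or.inl rfl)]
    norm_num
  · by_cases h2 : j = -t
    · subst h2
      rw [if_neg (fun h => hne h), if_pos rfl, if_pos (Or.inr rfl)]
      norm_num
    · rw [if_neg h1, if_neg h2, if_neg (fun h => h.elim h1 h2)]
      norm_num

include haM hbM in
lemma diag_mem_aux (Q : Finset (Fin (2*n+1))) :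
    (∀ t ∈ Q, 0 < (t : ℕ) ∧ (t : ℕ) ≤ n) → ∀ g : SLn n,
    (g : Matrix (Fin (2*n+1)) (Fin (2*n+1)) ℤ)
      = Matrix.diagonal (fun j => if j ∈ Q ∨ -j ∈ Q then -1 else 1) →
    g ∈ Subgroup.closure {a, b} := by
  induction Q using Finset.induction_on with
  | empty =>
    intro _ g hg
    have : g = 1 := by
      apply Subtype.ext
      rw [hg, Matrix.SpecialLinearGroup.coe_one]
      simp
    rw [this]; exact Subgroup.one_mem _
  | @insert t Q' htQ ih =>
    intro hQ g hg
    have ht0 : t ≠ 0 := by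
      have := (hQ t (Finset.mem_insert_self _ _)).1
      intro h; rw [h] at this; simp at this
    have htn : (t : ℕ) ≤ n := (hQ t (Finset.mem_insert_self _ _)).2
    have hQ' : ∀ x ∈ Q', 0 < (x : ℕ) ∧ (x : ℕ) ≤ n := fun x hx =>
      hQ x (Finset.mem_insert_of_mem hx)
    have hnegt : -t ∉ Q' := by
      intro hmem
      have := (hQ' _ hmem).2
      rw [fin_neg_val ht0] at this
      have ht1 : 0 < (t : ℕ) := (hQ t (Finset.mem_insert_self _ _)).1
      have := t.isLt
      omega
    obtain ⟨E, hEm, hEv⟩ := exists_pair a b haM hbM t ht0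
    set e : Fin (2*n+1) → ℤ := fun j => if j = t ∨ j = -t then -1 else 1 with he
    have hE2 : (E : Matrix (Fin (2*n+1)) (Fin (2*n+1)) ℤ) * Matrix.diagonal e = 1 := by
      rw [hEv, Matrix.diagonal_mul_diagonal]
      have : (fun i => e i * e i) = fun _ => (1:ℤ) := by
        funext i; rw [he]; dsimp only; split <;> norm_num
      rw [this, Matrix.diagonal_one]
    have hEinv : ((E⁻¹ : SLn n) : Matrix (Fin (2*n+1)) (Fin (2*n+1)) ℤ)
        = Matrix.diagonal e := coe_inv_of _ _ hE2
    have key : ∀ j : Fin (2*n+1),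
        e j * (if j ∈ insert t Q' ∨ -j ∈ insert t Q' then (-1:ℤ) else 1)
        = if j ∈ Q' ∨ -j ∈ Q' then -1 else 1 := by
      intro j
      have hne : -t ≠ t := fin_neg_ne ht0
      by_cases h1 : j = t
      · have c1 : j ∈ insert t Q' ∨ -j ∈ insert t Q' :=
          Or.inl (h1 ▸ Finset.mem_insert_self _ _)
        have c2 : ¬(j ∈ Q' ∨ -j ∈ Q') := by
          rintro (h | h)
          · rw [h1] at h; exact htQ h
          · rw [h1] at h; exact hnegt h
        rw [he]; dsimp only
        rw [if_pos (Or.inl h1), if_pos c1, if_neg c2]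
        norm_num
      · by_cases h2 : j = -t
        · have c1 : j ∈ insert t Q' ∨ -j ∈ insert t Q' :=
            Or.inr (by rw [h2, neg_neg]; exact Finset.mem_insert_self _ _)
          have c2 : ¬(j ∈ Q' ∨ -j ∈ Q') := by
            rintro (h | h)
            · rw [h2] at h; exact hnegt h
            · rw [h2, neg_neg] at h; exact htQ h
          rw [he]; dsimp only
          rw [if_pos (Or.inr h2), if_pos c1, if_neg c2]
          norm_num
        · have hm1 : j ∈ insert t Q' ↔ j ∈ Q' := by
            rw [Finset.mem_insert]
            exact ⟨fun h => h.resolve_left h1, Or.inr⟩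
          have hm2 : -j ∈ insert t Q' ↔ -j ∈ Q' := by
            rw [Finset.mem_insert]
            refine ⟨fun h => h.resolve_left ?_, Or.inr⟩
            intro h
            exact h2 (by rw [← h, neg_neg])
          rw [he]; dsimp only
          rw [if_neg (fun h => h.elim h1 h2), one_mul, if_congr (or_congr hm1 hm2) rfl rfl]
    have hg' : g = E * (E⁻¹ * g) := by rw [← mul_assoc, mul_inv_cancel, one_mul]
    have hmem' : (E⁻¹ * g) ∈ Subgroup.closure {a, b} := by
      apply ih hQ'
      rw [Matrix.SpecialLinearGroup.coe_mul, hEinv, hg, Matrix.diagonal_mul_diagonal]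
      exact congrArg Matrix.diagonal (funext key)
    rw [hg']
    exact Subgroup.mul_mem _ hEm hmem'

include haM hbM in
lemma diag_mem (ε : Fin (2*n+1) → ℤ) (hpm : ∀ j, ε j = 1 ∨ ε j = -1)
    (hsym : ∀ j, ε (-j) = ε j) (h0 : ε 0 = 1) (g : SLn n)
    (hg : (g : Matrix (Fin (2*n+1)) (Fin (2*n+1)) ℤ) = Matrix.diagonal ε) :
    g ∈ Subgroup.closure {a, b} := by
  classical
  set Q : Finset (Fin (2*n+1)) :=
    Finset.univ.filter (fun t => 0 < (t : ℕ) ∧ (t : ℕ) ≤ n ∧ ε t = -1) with hQdef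
  apply diag_mem_aux a b haM hbM Q
  · intro t ht
    rw [hQdef, Finset.mem_filter] at ht
    exact ⟨ht.2.1, ht.2.2.1⟩
  · rw [hg]
    apply congrArg Matrix.diagonal
    funext j
    have hmemQ : ∀ x : Fin (2*n+1), x ∈ Q ↔ 0 < (x:ℕ) ∧ (x:ℕ) ≤ n ∧ ε x = -1 := by
      intro x; rw [hQdef, Finset.mem_filter]; simp
    by_cases hj0 : j = 0
    · subst hj0
      rw [h0, if_neg]
      rw [neg_zero]
      rintro (h | h) <;> rw [hmemQ] at h <;> simp at h
    · have hjlt := j.isLt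
      have hjv : 0 < (j : ℕ) := Nat.pos_of_ne_zero (fun h => hj0 (Fin.ext h))
      by_cases hjn : (j : ℕ) ≤ n
      · have hnegnot : -j ∉ Q := by
          rw [hmemQ, fin_neg_val hj0]
          intro h
          omega
        by_cases hv : ε j = -1
        · rw [hv, if_pos (Or.inl ((hmemQ j).2 ⟨hjv, hjn, hv⟩))]
        · rcases hpm j with h | h
          · rw [h, if_neg]
            rintro (hh | hh)
            · rw [hmemQ] at hh; exact hv hh.2.2
            · exact hnegnot hh
          · exact absurd h hv
      · have hjnot : j ∉ Q := by rw [hmemQ]; intro h; exact hjn h.2.1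
        have hnegv : ((-j : Fin (2*n+1)) : ℕ) = 2*n+1 - (j:ℕ) := fin_neg_val hj0
        have hneg0 : (-j : Fin (2*n+1)) ≠ 0 := by
          intro h
          have : ((-j : Fin (2*n+1)) : ℕ) = 0 := by rw [h]; rfl
          omega
        by_cases hv : ε j = -1
        · have : ε (-j) = -1 := by rw [hsym]; exact hv
          rw [hv, if_pos (Or.inr ((hmemQ (-j)).2 ⟨by omega, by omega, this⟩))]
        · rcases hpm j with h | h
          · rw [h, if_neg]
            rintro (hh | hh)
            · exact hjnot hh
            · rw [hmemQ] at hh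
              apply hv
              rw [← hsym j]; exact hh.2.2
          · exact absurd h hv
end gen

/-! ### Structure of elements of the centralizer -/

section struct
variable (a b : SLn n)
  (haM : (a : Matrix (Fin (2*n+1)) (Fin (2*n+1)) ℤ) = mono (Equiv.neg _) (sgnA n))
  (hbM : (b : Matrix (Fin (2*n+1)) (Fin (2*n+1)) ℤ) = mono (Equiv.subRight 1) (fun _ => 1))

lemma pm_ne_zero {x : ℤ} (h : x = 1 ∨ x = -1) : x ≠ 0 := by
  rcases h with h | h <;> rw [h] <;> norm_num

lemma pm_cancel {s x y : ℤ} (hs : s = 1 ∨ s = -1) (h : s * x = s * y) : x = y :=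
  mul_left_cancel₀ (pm_ne_zero hs) h

include haM hbM in
lemma mem_C_struct (c : SLn n) (hc1 : c ∈ Subgroup.closure {a, b})
    (hc2 : c ∈ Subgroup.centralizer {a}) :
    (∃ δ : Fin (2*n+1) → ℤ, (∀ j, δ j = 1 ∨ δ j = -1) ∧ (∀ j, δ (-j) = δ j) ∧ δ 0 = 1 ∧
      (c : Matrix (Fin (2*n+1)) (Fin (2*n+1)) ℤ) = Matrix.diagonal δ) ∨
    (∃ δ : Fin (2*n+1) → ℤ, (∀ j, δ j = 1 ∨ δ j = -1) ∧ (∀ j, j ≠ 0 → δ (-j) = -δ j) ∧ δ 0 = 1 ∧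
      (c : Matrix (Fin (2*n+1)) (Fin (2*n+1)) ℤ) = mono (Equiv.neg _) δ) := by
  have hT : c ∈ Tgrp n := by
    refine (Subgroup.closure_le (Tgrp n)).2 ?_ hc1
    rintro x (hx | hx)
    · rw [hx]
      exact ⟨Equiv.neg _, sgnA n, dih_neg, sgnA_pm, haM⟩
    · rw [Set.mem_singleton_iff] at hx
      rw [hx]
      exact ⟨Equiv.subRight 1, fun _ => 1, dih_subRight, fun _ => Or.inl rfl, hbM⟩
  obtain ⟨σ, δ, hσ, hδ, hx⟩ := hT
  have hcomm : a * c = c * a := Subgroup.mem_centralizer_iff.1 hc2 a rfl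
  have hmat : (a : Matrix (Fin (2*n+1)) (Fin (2*n+1)) ℤ) * (c : Matrix (Fin (2*n+1)) (Fin (2*n+1)) ℤ)
      = (c : Matrix (Fin (2*n+1)) (Fin (2*n+1)) ℤ) * (a : Matrix (Fin (2*n+1)) (Fin (2*n+1)) ℤ) := by
    rw [← Matrix.SpecialLinearGroup.coe_mul, ← Matrix.SpecialLinearGroup.coe_mul, hcomm]
  rw [haM, hx, mono_mul, mono_mul] at hmat
  have hnz : ∀ j, sgnA n (σ j) * δ j ≠ 0 := fun j =>
    mul_ne_zero (pm_ne_zero (sgnA_pm _)) (pm_ne_zero (hδ j))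
  obtain ⟨hperm, hsgn⟩ := mono_inj hnz hmat
  have hsgn' : ∀ j, sgnA n (σ j) * δ j = δ (-j) * sgnA n j := by
    intro j
    have := congrFun hsgn j
    simpa [Equiv.neg_apply] using this
  rcases hσ with ⟨k, hσ⟩ | ⟨k, hσ⟩
  · -- translation case: k = 0, c diagonal
    have hk0 : k = 0 := by
      have h0 := congrFun (congrArg (fun e => (e : Fin (2*n+1) → Fin (2*n+1))) 
        (congrArg Equiv.toFun hperm)) 0
      try simp only [Equiv.Perm.mul_apply] at h0
      have h0' := DFunLike.congr_fun hperm (0 : Fin (2*n+1))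
      rw [Equiv.Perm.mul_apply, Equiv.Perm.mul_apply] at h0'
      simp only [Equiv.neg_apply] at h0'
      rw [hσ 0, hσ (-0)] at h0'
      apply fin_add_self_eq_zero
      have : -(0 + k) = -0 + k := h0'
      linear_combination -this
    have hσid : σ = 1 := by
      apply Equiv.ext
      intro j
      rw [hσ, hk0, add_zero, Equiv.Perm.one_apply]
    left
    refine ⟨δ, hδ, ?_, ?_, ?_⟩
    · intro j
      have := hsgn' j
      rw [hσid, Equiv.Perm.one_apply] at this
      have := this.symm
      rw [mul_comm (δ (-j)) (sgnA n j)] at this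
      exact pm_cancel (sgnA_pm j) this
    · -- δ 0 = 1 from det
      have hdet : ((c : Matrix (Fin (2*n+1)) (Fin (2*n+1)) ℤ)).det = 1 := c.2
      rw [hx, hσid, mono_one_eq, Matrix.det_diagonal] at hdet
      have hsym : ∀ j, δ (-j) = δ j := by
        intro j
        have := hsgn' j
        rw [hσid, Equiv.Perm.one_apply] at this
        have := this.symm
        rw [mul_comm (δ (-j)) (sgnA n j)] at this
        exact pm_cancel (sgnA_pm j) this
      rw [prodSym δ hδ hsym] at hdet
      exact hdet
    · rw [hx, hσid]; exact mono_one_eq δ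
  · -- reflection case: k = 0, σ = neg
    have hk0 : k = 0 := by
      have h0' := DFunLike.congr_fun hperm (0 : Fin (2*n+1))
      rw [Equiv.Perm.mul_apply, Equiv.Perm.mul_apply] at h0'
      simp only [Equiv.neg_apply] at h0'
      rw [hσ 0, hσ (-0)] at h0'
      apply fin_add_self_eq_zero
      have : -(-0 + k) = -(-0) + k := h0'
      linear_combination -this
    have hσneg : σ = Equiv.neg _ := by
      apply Equiv.ext
      intro j
      rw [hσ, hk0, add_zero, Equiv.neg_apply]
    have hanti : ∀ j, j ≠ 0 → δ (-j) = -δ j := by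
      intro j hj
      have := hsgn' j
      rw [hσneg, Equiv.neg_apply, sgnA_neg hj] at this
      have h2 : sgnA n j * δ (-j) = sgnA n j * (-δ j) := by
        rw [mul_comm (δ (-j)) (sgnA n j)] at this
        linear_combination -this
      exact pm_cancel (sgnA_pm j) h2
    right
    refine ⟨δ, hδ, hanti, ?_, by rw [hx, hσneg]⟩
    -- δ 0 = 1 from det of c * a
    have hdet : (((c * a : SLn n) : Matrix (Fin (2*n+1)) (Fin (2*n+1)) ℤ)).det = 1 := (c * a).2
    rw [Matrix.SpecialLinearGroup.coe_mul, hx, haM, hσneg, mono_mul, negPerm_sq,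
      mono_one_eq, Matrix.det_diagonal] at hdet
    set h : Fin (2*n+1) → ℤ := fun j => δ ((Equiv.neg (Fin (2*n+1))) j) * sgnA n j with hh
    have hpm : ∀ j, h j = 1 ∨ h j = -1 := by
      intro j
      rw [hh]; dsimp only
      rcases hδ ((Equiv.neg (Fin (2*n+1))) j) with h1 | h1 <;>
        rcases sgnA_pm (n := n) j with h2 | h2 <;> rw [h1, h2] <;> norm_num
    have hsym : ∀ j, h (-j) = h j := by
      intro j
      rw [hh]; simp only [Equiv.neg_apply]
      by_cases hj : j = 0
      · subst hj; simp
      · rw [neg_neg, sgnA_neg hj, hanti j hj]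
        ring
    rw [prodSym h hpm hsym] at hdet
    rw [hh] at hdet
    simpa [Equiv.neg_apply, sgnA_zero] using hdet
end struct

/-! ### The generating set `S` -/

def Sset (n : ℕ) : Set (SLn n) :=
  {c : SLn n | ∃ δ : Fin (2*n+1) → ℤ,
      (∀ j, δ j = 1 ∨ δ j = -1) ∧ δ 0 = 1 ∧ (∀ j, j ≠ 0 → δ (-j) = -δ j) ∧
      (c : Matrix (Fin (2*n+1)) (Fin (2*n+1)) ℤ)
        = Matrix.of fun i j => δ j * |Amat n i j|}

lemma mem_Sset_iff (c : SLn n) : c ∈ Sset n ↔ ∃ δ : Fin (2*n+1) → ℤ,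
    (∀ j, δ j = 1 ∨ δ j = -1) ∧ δ 0 = 1 ∧ (∀ j, j ≠ 0 → δ (-j) = -δ j) ∧
    (c : Matrix (Fin (2*n+1)) (Fin (2*n+1)) ℤ) = mono (Equiv.neg _) δ := by
  unfold Sset
  constructor
  · rintro ⟨δ, h1, h2, h3, h4⟩
    exact ⟨δ, h1, h2, h3, by rw [h4, of_abs]⟩
  · rintro ⟨δ, h1, h2, h3, h4⟩
    exact ⟨δ, h1, h2, h3, by rw [h4, of_abs]⟩

section part1
variable (a b : SLn n)
  (haM : (a : Matrix (Fin (2*n+1)) (Fin (2*n+1)) ℤ) = mono (Equiv.neg _) (sgnA n))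
  (hbM : (b : Matrix (Fin (2*n+1)) (Fin (2*n+1)) ℤ) = mono (Equiv.subRight 1) (fun _ => 1))

include haM in
lemma a_mem_S : a ∈ Sset n :=
  (mem_Sset_iff a).2 ⟨sgnA n, sgnA_pm, sgnA_zero, fun _ h => sgnA_neg h, haM⟩

include haM in
lemma a_inv_coe : ((a⁻¹ : SLn n) : Matrix (Fin (2*n+1)) (Fin (2*n+1)) ℤ)
    = mono (Equiv.neg _) (fun j => sgnA n (-j)) := by
  apply coe_inv_of
  rw [haM, mono_mul, negPerm_sq]
  have : (fun j => sgnA n ((Equiv.neg (Fin (2*n+1))) j) * sgnA n (-j)) = fun _ => (1:ℤ) := by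
    funext j
    simp only [Equiv.neg_apply]
    rcases sgnA_pm (n := n) (-j) with h | h <;> rw [h] <;> norm_num
  rw [this, mono_id]

include haM hbM in
lemma S_subset_inf : Sset n ⊆ ↑(Subgroup.closure {a, b} ⊓ Subgroup.centralizer {a}) := by
  intro c hc
  obtain ⟨δ, hpm, h0, hanti, hval⟩ := (mem_Sset_iff c).1 hc
  rw [SetLike.mem_coe, Subgroup.mem_inf]
  constructor
  · -- c ∈ closure {a, b}
    have hginv := a_inv_coe a haM
    have hgv : ((c * a⁻¹ : SLn n) : Matrix (Fin (2*n+1)) (Fin (2*n+1)) ℤ)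
        = Matrix.diagonal (fun j => δ (-j) * sgnA n (-j)) := by
      rw [Matrix.SpecialLinearGroup.coe_mul, hval, hginv, mono_mul, negPerm_sq, mono_one_eq]
      apply congrArg Matrix.diagonal
      funext j
      simp [Equiv.neg_apply]
    have hmem : (c * a⁻¹ : SLn n) ∈ Subgroup.closure {a, b} := by
      apply diag_mem a b haM hbM (fun j => δ (-j) * sgnA n (-j))
      · intro j
        rcases hpm (-j) with h1 | h1 <;> rcases sgnA_pm (n := n) (-j) with h2 | h2 <;>
          rw [h1, h2] <;> norm_num
      · intro j
        by_cases hj : j = 0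
        · subst hj; simp
        · rw [neg_neg, hanti j hj, sgnA_neg hj]
          ring
      · rw [neg_zero, h0, sgnA_zero, one_mul]
      · exact hgv
    have : c = (c * a⁻¹) * a := (inv_mul_cancel_right c a).symm
    rw [this]
    exact Subgroup.mul_mem _ hmem (Subgroup.subset_closure (Set.mem_insert _ _))
  · -- c commutes with a
    rw [Subgroup.mem_centralizer_iff]
    rintro x hx
    rw [Set.mem_singleton_iff] at hx
    subst hx
    apply Subtype.ext
    rw [Matrix.SpecialLinearGroup.coe_mul, Matrix.SpecialLinearGroup.coe_mul,
      haM, hval, mono_mul, mono_mul]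
    apply congrArg (mono _)
    funext j
    simp only [Equiv.neg_apply]
    by_cases hj : j = 0
    · subst hj
      rw [neg_zero]; ring
    · rw [sgnA_neg hj, hanti j hj]; ring

include haM hbM in
lemma part1 : Subgroup.closure (Sset n)
    = Subgroup.closure {a, b} ⊓ Subgroup.centralizer {a} := by
  apply le_antisymm
  · rw [Subgroup.closure_le]
    exact S_subset_inf a b haM hbM
  · intro c hc
    rw [Subgroup.mem_inf] at hc
    rcases mem_C_struct a b haM hbM c hc.1 hc.2 with ⟨δ, hpm, hsym, h0, hval⟩ | ⟨δ, hpm, hanti, h0, hval⟩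
    · -- diagonal case: c = (c*a) * a⁻¹ with c*a ∈ S
      have hmemS : (c * a : SLn n) ∈ Sset n := by
        rw [mem_Sset_iff]
        refine ⟨fun j => δ (-j) * sgnA n j, ?_, ?_, ?_, ?_⟩
        · intro j
          dsimp only
          rcases hpm (-j) with h1 | h1 <;> rcases sgnA_pm (n := n) j with h2 | h2 <;>
            rw [h1, h2] <;> norm_num
        · dsimp only
          rw [neg_zero, h0, sgnA_zero, one_mul]
        · intro j hj
          dsimp only
          rw [neg_neg, hsym j, sgnA_neg hj]
          ring
        · rw [Matrix.SpecialLinearGroup.coe_mul, hval, haM, ← mono_one_eq, mono_mul, one_mul]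
          apply congrArg (mono _)
          funext j
          simp [Equiv.neg_apply]
      have hca : c = (c * a) * a⁻¹ := (mul_inv_cancel_right c a).symm
      rw [hca]
      exact Subgroup.mul_mem _ (Subgroup.subset_closure hmemS)
        (Subgroup.inv_mem _ (Subgroup.subset_closure (a_mem_S a haM)))
    · -- reflection case: c ∈ S
      exact Subgroup.subset_closure ((mem_Sset_iff c).2 ⟨δ, hpm, h0, hanti, hval⟩)
end part1

/-! ### Counting -/

def vsgn (x : Bool) : ℤ := if x then 1 else -1

lemma vsgn_pm (x : Bool) : vsgn x = 1 ∨ vsgn x = -1 := by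
  cases x <;> simp [vsgn]

lemma vsgn_inj {x y : Bool} (h : vsgn x = vsgn y) : x = y := by
  cases x <;> cases y <;> simp_all [vsgn]

lemma vsgn_decide {x : ℤ} (h : x = 1 ∨ x = -1) : vsgn (decide (x = 1)) = x := by
  rcases h with h | h <;> subst h <;> simp [vsgn]

def iota (n : ℕ) (t : Fin n) : Fin (2*n+1) := ⟨t.val + 1, by omega⟩

lemma iota_ne_zero (t : Fin n) : iota n t ≠ 0 := by
  intro h
  have : (iota n t : ℕ) = 0 := by rw [h]; rfl
  simp [iota] at this

def delf (n : ℕ) (s : Bool) (v : Fin n → Bool) : Fin (2*n+1) → ℤ := fun j =>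
  if h0 : (j : ℕ) = 0 then 1
  else if h1 : (j : ℕ) ≤ n then vsgn (v ⟨(j : ℕ) - 1, by omega⟩)
  else (if s then -1 else 1) * vsgn (v ⟨2*n - (j : ℕ), by have := j.isLt; omega⟩)

lemma delf_pm (s : Bool) (v : Fin n → Bool) (j : Fin (2*n+1)) :
    delf n s v j = 1 ∨ delf n s v j = -1 := by
  unfold delf
  split
  · exact Or.inl rfl
  · split
    · exact vsgn_pm _
    · rcases vsgn_pm (v ⟨2*n - (j : ℕ), by have := j.isLt; omega⟩) with h | h <;>
        cases s <;> rw [h] <;> norm_num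

lemma delf_zero (s : Bool) (v : Fin n → Bool) : delf n s v 0 = 1 := by
  unfold delf
  rw [dif_pos (Fin.val_zero _)]

lemma delf_eval (s : Bool) (v : Fin n → Bool) (t : Fin n) :
    delf n s v (iota n t) = vsgn (v t) := by
  have h0 : ((iota n t : Fin (2*n+1)) : ℕ) = t.val + 1 := rfl
  have ht := t.isLt
  unfold delf
  rw [dif_neg (by omega), dif_pos (by omega)]
  have hidx : ∀ (p : (iota n t : ℕ) - 1 < n), (⟨(iota n t : ℕ) - 1, p⟩ : Fin n) = t :=
    fun p => Fin.ext (by show (iota n t : ℕ) - 1 = (t : ℕ); omega)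
  rw [hidx _]

lemma delf_neg (s : Bool) (v : Fin n → Bool) {j : Fin (2*n+1)} (hj : j ≠ 0) :
    delf n s v (-j) = (if s then -1 else 1) * delf n s v j := by
  have hnegv : ((-j : Fin (2*n+1)) : ℕ) = 2*n+1 - j.val := fin_neg_val hj
  have hjpos : 0 < j.val := Nat.pos_of_ne_zero (fun h => hj (Fin.ext h))
  have hjlt := j.isLt
  unfold delf
  by_cases h1 : (j : ℕ) ≤ n
  · rw [dif_neg (by omega), dif_neg (by omega), dif_neg (by omega), dif_pos h1]
    have hidx : ∀ (p1 : 2*n - ((-j : Fin (2*n+1)) : ℕ) < n) (p2 : (j : ℕ) - 1 < n),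
        (⟨2*n - ((-j : Fin (2*n+1)) : ℕ), p1⟩ : Fin n) = ⟨(j : ℕ) - 1, p2⟩ :=
      fun p1 p2 => Fin.ext (by show 2*n - ((-j : Fin (2*n+1)) : ℕ) = (j : ℕ) - 1; omega)
    rw [hidx _ (by omega)]
  · rw [dif_neg (by omega), dif_pos (by omega), dif_neg (by omega), dif_neg h1]
    have hidx : ∀ (p1 : ((-j : Fin (2*n+1)) : ℕ) - 1 < n) (p2 : 2*n - (j : ℕ) < n),
        (⟨((-j : Fin (2*n+1)) : ℕ) - 1, p1⟩ : Fin n) = ⟨2*n - (j : ℕ), p2⟩ :=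
      fun p1 p2 => Fin.ext (by show ((-j : Fin (2*n+1)) : ℕ) - 1 = 2*n - (j : ℕ); omega)
    rw [hidx _ (by omega)]
    cases s <;> simp

lemma delf_recover (s : Bool) (δ : Fin (2*n+1) → ℤ) (hpm : ∀ j, δ j = 1 ∨ δ j = -1)
    (h0 : δ 0 = 1) (hrel : ∀ j, j ≠ 0 → δ (-j) = (if s then -1 else 1) * δ j) :
    delf n s (fun t => decide (δ (iota n t) = 1)) = δ := by
  funext j
  have hjlt := j.isLt
  by_cases hj0 : j = 0
  · subst hj0
    rw [delf_zero, h0]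
  · have hjpos : 0 < j.val := Nat.pos_of_ne_zero (fun h => hj0 (Fin.ext h))
    unfold delf
    by_cases h1 : (j : ℕ) ≤ n
    · rw [dif_neg (by omega), dif_pos h1]
      have hi : ∀ (p : (j : ℕ) - 1 < n), iota n ⟨(j : ℕ) - 1, p⟩ = j :=
        fun p => Fin.ext (by show ((j : ℕ) - 1) + 1 = (j : ℕ); omega)
      dsimp only
      rw [hi _, vsgn_decide (hpm j)]
    · rw [dif_neg (by omega), dif_neg h1]
      have hnegv : ((-j : Fin (2*n+1)) : ℕ) = 2*n+1 - j.val := fin_neg_val hj0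
      have hi : ∀ (p : 2*n - (j : ℕ) < n), iota n ⟨2*n - (j : ℕ), p⟩ = -j :=
        fun p => Fin.ext (by show (2*n - (j : ℕ)) + 1 = ((-j : Fin (2*n+1)) : ℕ); rw [hnegv]; omega)
      dsimp only
      rw [hi _, vsgn_decide (hpm (-j)), hrel j hj0]
      cases s <;> simp

def Ds (n : ℕ) : Bool → Equiv.Perm (Fin (2*n+1))
  | true => Equiv.neg _
  | false => 1

lemma det_struct (hdetA : (Amat n).det = 1) (s : Bool) (δ : Fin (2*n+1) → ℤ)
    (hpm : ∀ j, δ j = 1 ∨ δ j = -1) (h0 : δ 0 = 1)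
    (hrel : ∀ j, j ≠ 0 → δ (-j) = (if s then -1 else 1) * δ j) :
    (mono (Ds n s) δ).det = 1 := by
  cases s
  · -- diagonal case
    have hsym : ∀ j, δ (-j) = δ j := by
      intro j
      by_cases hj : j = 0
      · subst hj; rw [neg_zero]
      · rw [hrel j hj]; simp
    rw [show Ds n false = 1 from rfl, mono_one_eq, Matrix.det_diagonal, prodSym δ hpm hsym, h0]
  · -- reflection case
    have hanti : ∀ j, j ≠ 0 → δ (-j) = -δ j := by
      intro j hj; rw [hrel j hj]; simp
    have hfac : mono (Ds n true) δ
        = Matrix.diagonal (fun j => δ j * sgnA n j) * Amat n := by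
      rw [Amat_eq, ← mono_one_eq, mono_mul, one_mul]
      show mono (Equiv.neg _) δ = _
      apply congrArg (mono _)
      funext j
      simp only [Equiv.neg_apply]
      by_cases hj : j = 0
      · subst hj
        rw [neg_zero, h0, sgnA_zero]; ring
      · rw [hanti j hj, sgnA_neg hj]
        rcases sgnA_pm (n := n) j with h | h <;> rw [h] <;> ring
    rw [hfac, Matrix.det_mul, Matrix.det_diagonal, hdetA, mul_one]
    have hsym2 : ∀ j, δ (-j) * sgnA n (-j) = δ j * sgnA n j := by
      intro j
      by_cases hj : j = 0
      · subst hj; rw [neg_zero]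
      · rw [hanti j hj, sgnA_neg hj]; ring
    have := prodSym (fun j => δ j * sgnA n j)
      (fun j => by
        rcases hpm j with h1 | h1 <;> rcases sgnA_pm (n := n) j with h2 | h2 <;>
          rw [h1, h2] <;> norm_num)
      (fun j => hsym2 j)
    rw [this]
    rw [h0, sgnA_zero, one_mul]

section card
variable (a b : SLn n)
  (haM : (a : Matrix (Fin (2*n+1)) (Fin (2*n+1)) ℤ) = mono (Equiv.neg _) (sgnA n))
  (hbM : (b : Matrix (Fin (2*n+1)) (Fin (2*n+1)) ℤ) = mono (Equiv.subRight 1) (fun _ => 1))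

include haM hbM in
lemma mem_inf_of_struct (c : SLn n) (s : Bool) (δ : Fin (2*n+1) → ℤ)
    (hpm : ∀ j, δ j = 1 ∨ δ j = -1) (h0 : δ 0 = 1)
    (hrel : ∀ j, j ≠ 0 → δ (-j) = (if s then -1 else 1) * δ j)
    (hval : (c : Matrix (Fin (2*n+1)) (Fin (2*n+1)) ℤ) = mono (Ds n s) δ) :
    c ∈ Subgroup.closure {a, b} ⊓ Subgroup.centralizer {a} := by
  cases s
  · -- diagonal case
    have hsym : ∀ j, δ (-j) = δ j := by
      intro j
      by_cases hj : j = 0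
      · subst hj; rw [neg_zero]
      · rw [hrel j hj]; simp
    rw [Subgroup.mem_inf]
    constructor
    · exact diag_mem a b haM hbM δ hpm hsym h0 c
        (by rw [hval, show Ds n false = 1 from rfl, mono_one_eq])
    · rw [Subgroup.mem_centralizer_iff]
      rintro x hx
      rw [Set.mem_singleton_iff] at hx
      subst hx
      apply Subtype.ext
      rw [Matrix.SpecialLinearGroup.coe_mul, Matrix.SpecialLinearGroup.coe_mul,
        haM, hval, show Ds n false = 1 from rfl, mono_mul, mono_mul,
        mul_one, one_mul]
      apply congrArg (mono _)
      funext j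
      simp only [Equiv.Perm.one_apply, Equiv.neg_apply]
      rw [hsym j]; ring
  · -- reflection case: member of S
    have hanti : ∀ j, j ≠ 0 → δ (-j) = -δ j := by
      intro j hj; rw [hrel j hj]; simp
    exact S_subset_inf a b haM hbM
      ((mem_Sset_iff c).2 ⟨δ, hpm, h0, hanti, by rw [hval]; rfl⟩)

include haM hbM in
lemma card_part (hn : 0 < n) (hdetA : (Amat n).det = 1) :
    Nat.card ↥(Subgroup.closure {a, b} ⊓ Subgroup.centralizer {a}) = 2^(n+1) := by
  classical
  set C := Subgroup.closure {a, b} ⊓ Subgroup.centralizer {a} with hC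
  let F : Bool × (Fin n → Bool) → ↥C := fun p =>
    ⟨⟨mono (Ds n p.1) (delf n p.1 p.2),
      det_struct hdetA p.1 (delf n p.1 p.2) (delf_pm p.1 p.2) (delf_zero p.1 p.2)
        (fun j hj => delf_neg p.1 p.2 hj)⟩,
      mem_inf_of_struct a b haM hbM _ p.1 (delf n p.1 p.2) (delf_pm p.1 p.2)
        (delf_zero p.1 p.2) (fun j hj => delf_neg p.1 p.2 hj) rfl⟩
  have hFinj : Function.Injective F := by
    rintro ⟨s, v⟩ ⟨s', v'⟩ h
    have hmat : mono (Ds n s) (delf n s v) = mono (Ds n s') (delf n s' v') := by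
      have := congrArg (fun x : ↥C => ((x : SLn n) : Matrix (Fin (2*n+1)) (Fin (2*n+1)) ℤ)) h
      exact this
    obtain ⟨hDs, hdelf⟩ := mono_inj (fun j => pm_ne_zero (delf_pm s v j)) hmat
    have hss : s = s' := by
      by_contra hne
      have hj0 : iota n ⟨0, hn⟩ ≠ 0 := iota_ne_zero _
      have hcontra : Equiv.neg (Fin (2*n+1)) = 1 := by
        cases s <;> cases s' <;> simp_all [Ds]
      have := DFunLike.congr_fun hcontra (iota n ⟨0, hn⟩)
      simp only [Equiv.neg_apply, Equiv.Perm.one_apply] at this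
      exact fin_neg_ne hj0 this
    subst hss
    have hvv : v = v' := by
      funext t
      apply vsgn_inj
      rw [← delf_eval s v t, ← delf_eval s v' t, hdelf]
    rw [hvv]
  have hFsurj : Function.Surjective F := by
    rintro ⟨c, hc⟩
    rw [hC, Subgroup.mem_inf] at hc
    rcases mem_C_struct a b haM hbM c hc.1 hc.2 with
      ⟨δ, hpm, hsym, h0, hval⟩ | ⟨δ, hpm, hanti, h0, hval⟩
    · refine ⟨(false, fun t => decide (δ (iota n t) = 1)), ?_⟩
      apply Subtype.ext
      apply Subtype.ext
      show mono (Ds n false) (delf n false _) = _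
      rw [delf_recover false δ hpm h0 (fun j hj => by rw [hsym j]; simp),
        show Ds n false = 1 from rfl, mono_one_eq, hval]
    · refine ⟨(true, fun t => decide (δ (iota n t) = 1)), ?_⟩
      apply Subtype.ext
      apply Subtype.ext
      show mono (Ds n true) (delf n true _) = _
      rw [delf_recover true δ hpm h0 (fun j hj => by rw [hanti j hj]; simp), hval]
      rfl
  have hcard := Nat.card_eq_of_bijective F ⟨hFinj, hFsurj⟩
  rw [← hcard, Nat.card_eq_fintype_card, Fintype.card_prod, Fintype.card_fun,
    Fintype.card_bool, Fintype.card_fin, pow_succ]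
  ring
end card

end CentralizerAux


/-- The centralizer of `a` in `G_{2n+1}` has order `2^{n+1}`, and is generated by the
elements `(1, ε₂(2n+1), …, ε_{n+1}(n+2), −ε_{n+1}(n+1), …, −ε₂(2))` with `ε_j = ±1`,
i.e. the signed permutation matrices with the same underlying permutation as `a`,
column signs `δ` satisfying `δ₀ = 1` and `δ_{-j} = −δ_j` for `j ≠ 0`. -/
theorem centralizer_of_a (n : ℕ) (hn : 0 < n)
    (a b : Matrix.SpecialLinearGroup (Fin (2*n+1)) ℤ)
    (ha : (a : Matrix (Fin (2*n+1)) (Fin (2*n+1)) ℤ) = Amat n)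
    (hb : (b : Matrix (Fin (2*n+1)) (Fin (2*n+1)) ℤ) = Bmat n) :
    Subgroup.closure {c : Matrix.SpecialLinearGroup (Fin (2*n+1)) ℤ |
        ∃ δ : Fin (2*n+1) → ℤ,
          (∀ j, δ j = 1 ∨ δ j = -1) ∧ δ 0 = 1 ∧ (∀ j, j ≠ 0 → δ (-j) = -δ j) ∧
          (c : Matrix (Fin (2*n+1)) (Fin (2*n+1)) ℤ)
            = Matrix.of fun i j => δ j * |Amat n i j|}
      = Subgroup.closure {a, b} ⊓ Subgroup.centralizer {a} ∧
    Nat.card ↥(Subgroup.closure {a, b} ⊓ Subgroup.centralizer {a}) = 2^(n+1) := by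
  have haM : (a : Matrix (Fin (2*n+1)) (Fin (2*n+1)) ℤ)
      = CentralizerAux.mono (Equiv.neg _) (CentralizerAux.sgnA n) := by
    rw [ha, CentralizerAux.Amat_eq]
  have hbM : (b : Matrix (Fin (2*n+1)) (Fin (2*n+1)) ℤ)
      = CentralizerAux.mono (Equiv.subRight 1) (fun _ => 1) := by
    rw [hb, CentralizerAux.Bmat_eq]
  have hdetA : (Amat n).det = 1 := by rw [← ha]; exact a.2
  constructor
  · exact CentralizerAux.part1 a b haM hbM
  · exact CentralizerAux.card_part a b haM hbM hn hdetA
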